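/- Let R ≥ 0 and let x, φ be real numbers with |x| ≤ R and |φ| ≤ π/4. Then −2 − 3R·cos φ + R·cos 3φ + 3x·sin φ + x·sin 3φ ≤ −2; in particular this expression is strictly negative. -/
import Mathlib


open Real

lemma key_ineq (R x s c : ℝ) (hR : 0 ≤ R) (hxs : x * s ≤ R * |s|) (hsc : |s| ≤ c)
    (hpyth : s ^ 2 + c ^ 2 = 1) :
    x * (6 * s - 4 * s ^ 3) ≤ R * (6 * c - 4 * c ^ 3) := by
  set a := |s| with ha_def
  have ha : (0:ℝ) ≤ a := abs_nonneg s
  have ha2 : a ^ 2 = s ^ 2 := sq_abs s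
  have hpa : a ^ 2 + c ^ 2 = 1 := by rw [ha2]; exact hpyth
  have hca : 2 * c * a ≤ 1 := by nlinarith [sq_nonneg (c - a)]
  have h1 : (R * a - x * s) * (6 - 4 * s ^ 2) ≥ 0 := by
    apply mul_nonneg (by linarith)
    nlinarith [sq_nonneg c]
  have h2 : 2 * R * ((c - a) * (1 - 2 * c * a)) ≥ 0 := by
    have := mul_nonneg hR (mul_nonneg (by linarith : (0:ℝ) ≤ c - a) (by linarith : (0:ℝ) ≤ 1 - 2 * c * a))
    linarith
  have e1 : R * (6 * c - 4 * c ^ 3) - R * (6 * a - 4 * a ^ 3) = 2 * R * ((c - a) * (1 - 2 * c * a)) := by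
    linear_combination (-4 * R * (c - a)) * hpa
  have e2 : R * (6 * a - 4 * a ^ 3) - x * (6 * s - 4 * s ^ 3) = (R * a - x * s) * (6 - 4 * s ^ 2) := by
    linear_combination (-4 * R * a) * ha2
  linarith

/-- The numerator of `g'(φ)` is bounded above by `-2`, hence strictly negative, on the
region `|x| ≤ R`, `|φ| ≤ π/4`. -/
theorem numerator_negative (R x φ : ℝ) (hR : 0 ≤ R) (hx : |x| ≤ R) (hφ : |φ| ≤ π / 4) :
    -2 - 3 * R * Real.cos φ + R * Real.cos (3 * φ) + 3 * x * Real.sin φ +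
        x * Real.sin (3 * φ) ≤ -2 ∧
    -2 - 3 * R * Real.cos φ + R * Real.cos (3 * φ) + 3 * x * Real.sin φ +
        x * Real.sin (3 * φ) < 0 := by
  have hs3 : Real.sin (3 * φ) = 3 * Real.sin φ - 4 * Real.sin φ ^ 3 := Real.sin_three_mul φ
  have hc3 : Real.cos (3 * φ) = 4 * Real.cos φ ^ 3 - 3 * Real.cos φ := Real.cos_three_mul φ
  have hpyth : Real.sin φ ^ 2 + Real.cos φ ^ 2 = 1 := Real.sin_sq_add_cos_sq φ
  have hφ' := abs_le.mp hφ
  have hπ := Real.pi_pos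
  have h1 : Real.sin φ ≤ Real.sqrt 2 / 2 := by
    rw [← Real.sin_pi_div_four]
    exact Real.sin_le_sin_of_le_of_le_pi_div_two (by linarith) (by linarith) hφ'.2
  have h1' : -(Real.sqrt 2 / 2) ≤ Real.sin φ := by
    rw [← Real.sin_pi_div_four, ← Real.sin_neg]
    exact Real.sin_le_sin_of_le_of_le_pi_div_two (by linarith) (by linarith) hφ'.1
  have h2 : Real.sqrt 2 / 2 ≤ Real.cos φ := by
    have : Real.cos (π / 4) ≤ Real.cos φ := by
      rcases le_or_gt 0 φ with h | h
      · exact Real.cos_le_cos_of_nonneg_of_le_pi h (by linarith) hφ'.2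
      · rw [← Real.cos_neg φ]
        exact Real.cos_le_cos_of_nonneg_of_le_pi (by linarith) (by linarith) (by linarith)
    rwa [Real.cos_pi_div_four] at this
  have hsc : |Real.sin φ| ≤ Real.cos φ := by
    rw [abs_le]
    constructor <;> linarith
  have hxs : x * Real.sin φ ≤ R * |Real.sin φ| := by
    calc x * Real.sin φ ≤ |x * Real.sin φ| := le_abs_self _
    _ = |x| * |Real.sin φ| := abs_mul x _
    _ ≤ R * |Real.sin φ| := mul_le_mul_of_nonneg_right hx (abs_nonneg _)
  have hkey := key_ineq R x (Real.sin φ) (Real.cos φ) hR hxs hsc hpyth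
  rw [hs3, hc3]
  constructor
  · nlinarith [hkey]
  · nlinarith [hkey]
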